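/- The Gaussian mechanism M(D) = f(D) + N(0, σ²) applied to a function f with ℓ2-sensitivity Δ satisfies (Δ²/(2σ²))-zCDP. -/

import Mathlib

open MeasureTheory ProbabilityTheory Real
open scoped NNReal ENNReal

/-- The `α`-Rényi divergence between probability measures, via the
Radon–Nikodym derivative. -/
noncomputable def renyiDiv {Ω : Type*} [MeasurableSpace Ω] (α : ℝ)
    (P Q : Measure Ω) : ℝ :=
  (α - 1)⁻¹ * Real.log (∫ x, ((P.rnDeriv Q x).toReal) ^ α ∂Q)

/-- `ρ`-zero-concentrated differential privacy for a mechanism. -/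
def zCDP {D Ω : Type*} [MeasurableSpace Ω] (Neighbor : D → D → Prop)
    (M : D → Measure Ω) (ρ : ℝ) : Prop :=
  ∀ d d', Neighbor d d' → ∀ α : ℝ, 1 < α → renyiDiv α (M d) (M d') ≤ ρ * α


lemma rnDeriv_gauss_gauss (m1 m2 : ℝ) {v : ℝ≥0} (hv : v ≠ 0) :
    (gaussianReal m1 v).rnDeriv (gaussianReal m2 v)
      =ᵐ[gaussianReal m2 v]
      fun x => ENNReal.ofReal (gaussianPDFReal m1 v x / gaussianPDFReal m2 v x) := by
  have hQ : gaussianReal m2 v ≪ volume := gaussianReal_absolutelyContinuous _ hv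
  have h1 : (gaussianReal m1 v).rnDeriv (gaussianReal m2 v)
      =ᵐ[volume] fun x => (gaussianPDF m2 v x)⁻¹ * (gaussianReal m1 v).rnDeriv volume x := by
    conv_lhs => rw [gaussianReal_of_var_ne_zero m2 hv]
    exact Measure.rnDeriv_withDensity_right _ _ (measurable_gaussianPDF m2 v).aemeasurable
      (ae_of_all _ fun x => (gaussianPDF_pos m2 hv x).ne')
      (ae_of_all _ fun x => ENNReal.ofReal_ne_top)
  have h2 := rnDeriv_gaussianReal m1 v
  filter_upwards [hQ.ae_le h1, hQ.ae_le h2] with x hx1 hx2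
  rw [hx1, hx2, gaussianPDF, gaussianPDF,
    ENNReal.ofReal_div_of_pos (gaussianPDFReal_pos m2 v x hv), div_eq_mul_inv, mul_comm]

lemma pdf_pow_mul (m1 m2 α : ℝ) {v : ℝ≥0} (hv : v ≠ 0) (x : ℝ) :
    gaussianPDFReal m2 v x * (gaussianPDFReal m1 v x / gaussianPDFReal m2 v x) ^ α
    = Real.exp (α * (α - 1) * (m1 - m2) ^ 2 / (2 * (v : ℝ)))
      * gaussianPDFReal (α * m1 + (1 - α) * m2) v x := by
  have hv' : (0 : ℝ) < v := NNReal.coe_pos.mpr hv.bot_lt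
  simp only [gaussianPDFReal]
  rw [mul_div_mul_left _ _ (by positivity : (Real.sqrt (2 * π * v))⁻¹ ≠ 0),
    ← Real.exp_sub, ← Real.exp_mul, mul_assoc, ← Real.exp_add, mul_left_comm,
    ← Real.exp_add]
  congr 2
  field_simp
  ring

lemma integral_pow_rnDeriv (m1 m2 α : ℝ) {v : ℝ≥0} (hv : v ≠ 0) :
    ∫ x, (((gaussianReal m1 v).rnDeriv (gaussianReal m2 v)) x).toReal ^ α ∂(gaussianReal m2 v)
    = Real.exp (α * (α - 1) * (m1 - m2) ^ 2 / (2 * (v : ℝ))) := by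
  have h1 : ∫ x, (((gaussianReal m1 v).rnDeriv (gaussianReal m2 v)) x).toReal ^ α
        ∂(gaussianReal m2 v)
      = ∫ x, (gaussianPDFReal m1 v x / gaussianPDFReal m2 v x) ^ α ∂(gaussianReal m2 v) := by
    refine integral_congr_ae ?_
    filter_upwards [rnDeriv_gauss_gauss m1 m2 hv] with x hx
    rw [hx, ENNReal.toReal_ofReal
      (div_nonneg (gaussianPDFReal_nonneg _ _ _) (gaussianPDFReal_nonneg _ _ _))]
  rw [h1, gaussianReal_of_var_ne_zero _ hv]
  have h2 : (gaussianPDF m2 v) = fun x => ((gaussianPDFReal m2 v x).toNNReal : ℝ≥0∞) := rfl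
  rw [h2, integral_withDensity_eq_integral_smul ((measurable_gaussianPDFReal m2 v).real_toNNReal)]
  simp_rw [NNReal.smul_def, Real.coe_toNNReal _ (gaussianPDFReal_nonneg _ _ _), smul_eq_mul,
    pdf_pow_mul m1 m2 α hv]
  rw [integral_const_mul, integral_gaussianPDFReal_eq_one _ hv, mul_one]

/-- The Gaussian mechanism `M(D) = f(D) + N(0, σ²)`, i.e. `M(D) ∼ N(f(D), σ²)`,
applied to a real-valued function `f` of sensitivity `Δ`, satisfies
`(Δ²/(2σ²))`-zCDP. -/
theorem gaussian_mechanism_zCDP {D : Type*} (Neighbor : D → D → Prop)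
    (f : D → ℝ) (Δ : ℝ) (hΔ : ∀ d d', Neighbor d d' → |f d - f d'| ≤ Δ)
    (σ : ℝ) (hσ : 0 < σ) :
    zCDP Neighbor (fun d => gaussianReal (f d) ((σ ^ 2).toNNReal))
      (Δ ^ 2 / (2 * σ ^ 2)) := by
  intro d d' h α hα
  have hv : (σ ^ 2).toNNReal ≠ 0 := by
    rw [ne_eq, Real.toNNReal_eq_zero, not_le]
    positivity
  have hcoe : (((σ ^ 2).toNNReal : ℝ)) = σ ^ 2 := Real.coe_toNNReal _ (by positivity)
  simp only [renyiDiv]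
  rw [integral_pow_rnDeriv _ _ _ hv, Real.log_exp, hcoe]
  have h1 : α - 1 ≠ 0 := ne_of_gt (by linarith)
  have key : (α - 1)⁻¹ * (α * (α - 1) * (f d - f d') ^ 2 / (2 * σ ^ 2))
      = α * (f d - f d') ^ 2 / (2 * σ ^ 2) := by
    field_simp
  rw [key]
  have hb : (f d - f d') ^ 2 ≤ Δ ^ 2 := by
    rw [← sq_abs]
    exact pow_le_pow_left₀ (abs_nonneg _) (hΔ _ _ h) 2
  calc α * (f d - f d') ^ 2 / (2 * σ ^ 2) ≤ α * Δ ^ 2 / (2 * σ ^ 2) := by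
        gcongr
    _ = Δ ^ 2 / (2 * σ ^ 2) * α := by ring
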